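/- Let λ ∈ ℝ, let a : [0,∞) → ℂ be bounded and continuous and b, c : [0,∞) → ℂ be bounded and measurable, and suppose that ∫_0^t a(s) ds = ∫_0^t b(s) ds + iλ ∫_0^t (∫_0^{t−s} c(r) dr)·a(s) ds for all t ≥ 0. Then for every p ∈ ℂ with Re p > 0 such that iλ·ĉ(p) ≠ 1, the Laplace transforms satisfy â(p) = b̂(p)/(1 − iλ·ĉ(p)), where x̂(p) = ∫_0^∞ e^{−pt} x(t) dt. -/

import Mathlib

open MeasureTheory Complex Filter


lemma vlt_exp_integrable {p : ℂ} (hp : 0 < p.re) :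
    IntegrableOn (fun x : ℝ => Complex.exp (-(p * x))) (Set.Ioi 0) := by
  refine ((exp_neg_integrableOn_Ioi 0 hp).mono' ?_ ?_)
  · exact (Complex.continuous_exp.comp
      (continuous_const.mul Complex.continuous_ofReal).neg).aestronglyMeasurable.restrict
  · refine Filter.Eventually.of_forall fun x => ?_
    rw [Complex.norm_exp]
    simp [neg_mul]

lemma vlt_integral_cexp {p : ℂ} (hp : 0 < p.re) :
    ∫ x in Set.Ioi (0:ℝ), Complex.exp (-(p * x)) = 1 / p := by
  have hp0 : p ≠ 0 := fun h => by simp [h] at hp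
  have hderiv : ∀ x ∈ Set.Ici (0:ℝ), HasDerivAt (fun x : ℝ => -Complex.exp (-(p * x)) / p)
      (Complex.exp (-(p * x))) x := by
    intro x _
    have h1 : HasDerivAt (fun z : ℂ => -Complex.exp (-(p * z)) / p)
        (Complex.exp (-(p * (x:ℂ)))) (x : ℂ) := by
      have h2 : HasDerivAt (fun z : ℂ => -(p * z)) (-p) (x:ℂ) := by
        have := ((hasDerivAt_id (x:ℂ)).const_mul p).neg
        simp only [mul_one] at this
        exact this
      have := (h2.cexp.neg.div_const p)
      rw [mul_neg, neg_neg, mul_div_cancel_right₀ _ hp0] at this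
      exact this
    exact h1.comp_ofReal
  have htend : Tendsto (fun x : ℝ => -Complex.exp (-(p * x)) / p) atTop (nhds 0) := by
    rw [tendsto_zero_iff_norm_tendsto_zero]
    have : (fun x : ℝ => ‖-Complex.exp (-(p * x)) / p‖) =
        fun x : ℝ => Real.exp (-(p.re * x)) / ‖p‖ := by
      ext x
      rw [norm_div, norm_neg, Complex.norm_exp]
      simp [neg_mul]
    rw [this]
    have h3 : Tendsto (fun x : ℝ => -(p.re * x)) atTop atBot :=
      tendsto_neg_atTop_atBot.comp (Filter.Tendsto.const_mul_atTop hp tendsto_id)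
    simpa using (Real.tendsto_exp_atBot.comp h3).div_const ‖p‖
  have := integral_Ioi_of_hasDerivAt_of_tendsto' hderiv (vlt_exp_integrable hp) htend
  rw [this]; field_simp; simp

lemma vlt_exp_split (p : ℂ) (x t : ℝ) :
    Complex.exp (-(p * t)) * Complex.exp (-(p * ((x - t : ℝ) : ℂ))) =
      Complex.exp (-(p * x)) := by
  rw [← Complex.exp_add]
  congr 1
  push_cast
  ring

/-- Laplace transform of a forward convolution is the product of the transforms. -/
lemma vlt_conv {p : ℂ} (f g : ℝ → ℂ)
    (hIf : IntegrableOn (fun s : ℝ => Complex.exp (-(p * s)) * f s) (Set.Ioi 0))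
    (hIg : IntegrableOn (fun s : ℝ => Complex.exp (-(p * s)) * g s) (Set.Ioi 0)) :
    (∫ x in Set.Ioi (0:ℝ), Complex.exp (-(p * x)) * ∫ t in (0:ℝ)..x, g (x - t) * f t) =
      (∫ s in Set.Ioi (0:ℝ), Complex.exp (-(p * s)) * f s) *
        (∫ s in Set.Ioi (0:ℝ), Complex.exp (-(p * s)) * g s) := by
  have h := integral_posConvolution hIf hIg (ContinuousLinearMap.mul ℝ ℂ)
  simp only [ContinuousLinearMap.mul_apply'] at h
  rw [← h]
  refine setIntegral_congr_fun measurableSet_Ioi fun x _ => ?_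
  rw [← intervalIntegral.integral_const_mul]
  refine intervalIntegral.integral_congr fun t _ => ?_
  rw [mul_mul_mul_comm, vlt_exp_split p x t]
  ring

lemma vlt_conv_int {p : ℂ} (f g : ℝ → ℂ)
    (hIf : IntegrableOn (fun s : ℝ => Complex.exp (-(p * s)) * f s) (Set.Ioi 0))
    (hIg : IntegrableOn (fun s : ℝ => Complex.exp (-(p * s)) * g s) (Set.Ioi 0)) :
    IntegrableOn (fun x : ℝ => Complex.exp (-(p * x)) * ∫ t in (0:ℝ)..x, g (x - t) * f t)
      (Set.Ioi 0) := by
  have h := integrable_posConvolution hIf hIg (ContinuousLinearMap.mul ℝ ℂ)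
  unfold posConvolution at h
  rw [integrable_indicator_iff measurableSet_Ioi] at h
  refine h.congr_fun (fun x _ => ?_) measurableSet_Ioi
  simp only [ContinuousLinearMap.mul_apply']
  rw [← intervalIntegral.integral_const_mul]
  refine intervalIntegral.integral_congr fun t _ => ?_
  rw [mul_mul_mul_comm, vlt_exp_split p x t]
  ring

/-- Laplace transform of the primitive is the transform divided by `p`. -/
lemma vlt_fub1 {p : ℂ} (hp : 0 < p.re) (f : ℝ → ℂ)
    (hIf : IntegrableOn (fun s : ℝ => Complex.exp (-(p * s)) * f s) (Set.Ioi 0)) :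
    (∫ x in Set.Ioi (0:ℝ), Complex.exp (-(p * x)) * ∫ t in (0:ℝ)..x, f t) =
      (∫ s in Set.Ioi (0:ℝ), Complex.exp (-(p * s)) * f s) * (1 / p) := by
  have hIone : IntegrableOn (fun s : ℝ => Complex.exp (-(p * s)) * (1:ℂ)) (Set.Ioi 0) := by
    simpa using vlt_exp_integrable hp
  have h := vlt_conv f (fun _ => (1:ℂ)) hIf hIone
  simp only [one_mul, mul_one] at h
  rw [h, vlt_integral_cexp hp]

lemma vlt_fub1_int {p : ℂ} (hp : 0 < p.re) (f : ℝ → ℂ)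
    (hIf : IntegrableOn (fun s : ℝ => Complex.exp (-(p * s)) * f s) (Set.Ioi 0)) :
    IntegrableOn (fun x : ℝ => Complex.exp (-(p * x)) * ∫ t in (0:ℝ)..x, f t)
      (Set.Ioi 0) := by
  have hIone : IntegrableOn (fun s : ℝ => Complex.exp (-(p * s)) * (1:ℂ)) (Set.Ioi 0) := by
    simpa using vlt_exp_integrable hp
  have h := vlt_conv_int f (fun _ => (1:ℂ)) hIf hIone
  simpa using h


set_option maxHeartbeats 1000000 in
/-- If a bounded continuous `a` satisfies the Volterra convolution equation
`∫_0^t a = ∫_0^t b + iλ ∫_0^t (∫_0^{t-s} c) a(s) ds` for all `t ≥ 0`, then for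
every `p` with `Re p > 0` and `iλ·ĉ(p) ≠ 1` the Laplace transforms satisfy
`â(p) = b̂(p) / (1 - iλ·ĉ(p))`. -/
theorem volterra_laplace_transform (lam : ℝ) (a b c : ℝ → ℂ)
    (ha_cont : ContinuousOn a (Set.Ici 0))
    (ha_bdd : ∃ C : ℝ, ∀ t : ℝ, 0 ≤ t → ‖a t‖ ≤ C)
    (hb_meas : AEStronglyMeasurable b (volume : Measure ℝ))
    (hb_bdd : ∃ C : ℝ, ∀ t : ℝ, 0 ≤ t → ‖b t‖ ≤ C)
    (hc_meas : AEStronglyMeasurable c (volume : Measure ℝ))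
    (hc_bdd : ∃ C : ℝ, ∀ t : ℝ, 0 ≤ t → ‖c t‖ ≤ C)
    (heq : ∀ t : ℝ, 0 ≤ t →
      (∫ s in (0:ℝ)..t, a s) =
        (∫ s in (0:ℝ)..t, b s) +
          Complex.I * lam * ∫ s in (0:ℝ)..t, (∫ r in (0:ℝ)..(t - s), c r) * a s) :
    ∀ p : ℂ, 0 < p.re →
      Complex.I * lam * (∫ s in Set.Ioi (0:ℝ), Complex.exp (-(p * s)) * c s) ≠ 1 →
      (∫ s in Set.Ioi (0:ℝ), Complex.exp (-(p * s)) * a s) =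
        (∫ s in Set.Ioi (0:ℝ), Complex.exp (-(p * s)) * b s) /
          (1 - Complex.I * lam * ∫ s in Set.Ioi (0:ℝ), Complex.exp (-(p * s)) * c s) := by
  intro p hp hne
  obtain ⟨Ca, hCa⟩ := ha_bdd
  obtain ⟨Cb, hCb⟩ := hb_bdd
  obtain ⟨Cc, hCc⟩ := hc_bdd
  have hp0 : p ≠ 0 := fun h => by simp [h] at hp
  have hexp_norm : ∀ x : ℝ, ‖Complex.exp (-(p * x))‖ = Real.exp (-(p.re * x)) := by
    intro x
    rw [Complex.norm_exp]
    simp [neg_mul]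
  have hcont_exp : Continuous fun x : ℝ => Complex.exp (-(p * x)) :=
    Complex.continuous_exp.comp (continuous_const.mul Complex.continuous_ofReal).neg
  -- indicator version of c, with continuous primitive K
  have hc'_meas : AEStronglyMeasurable (Set.indicator (Set.Ici 0) c) volume :=
    hc_meas.indicator measurableSet_Ici
  have hc'_bdd : ∀ t : ℝ, ‖Set.indicator (Set.Ici 0) c t‖ ≤ max Cc 0 := by
    intro t
    by_cases h : t ∈ Set.Ici (0:ℝ)
    · rw [Set.indicator_of_mem h]; exact (hCc t h).trans (le_max_left _ _)
    · rw [Set.indicator_of_notMem h]; simp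
  have hc'_ii : ∀ u v : ℝ, IntervalIntegrable (Set.indicator (Set.Ici 0) c) volume u v := by
    intro u v
    rw [intervalIntegrable_iff]
    haveI : IsFiniteMeasure (volume.restrict (Set.uIoc u v)) :=
      ⟨by rw [Measure.restrict_apply_univ]; exact measure_Ioc_lt_top⟩
    exact (integrable_const (max Cc 0)).mono' hc'_meas.restrict
      (Filter.Eventually.of_forall fun x => hc'_bdd x)
  set K : ℝ → ℂ := fun u => ∫ r in (0:ℝ)..u, Set.indicator (Set.Ici 0) c r with hK
  have hK_cont : Continuous K := intervalIntegral.continuous_primitive hc'_ii 0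
  have hK_bdd : ∀ u : ℝ, ‖K u‖ ≤ max Cc 0 * |u| := by
    intro u
    calc ‖K u‖ ≤ max Cc 0 * |u - 0| :=
      intervalIntegral.norm_integral_le_of_norm_le_const fun x _ => hc'_bdd x
    _ = max Cc 0 * |u| := by rw [sub_zero]
  -- integrability of the exponentially weighted functions
  have key_int : ∀ (f : ℝ → ℂ) (Cf : ℝ), AEStronglyMeasurable f (volume.restrict (Set.Ioi 0)) →
      (∀ t : ℝ, 0 ≤ t → ‖f t‖ ≤ Cf) →
      IntegrableOn (fun s : ℝ => Complex.exp (-(p * s)) * f s) (Set.Ioi 0) := by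
    intro f Cf hfm hfb
    refine (((exp_neg_integrableOn_Ioi 0 hp).const_mul Cf).mono'
      (hcont_exp.aestronglyMeasurable.restrict.mul hfm) ?_)
    filter_upwards [self_mem_ae_restrict measurableSet_Ioi] with x hx
    rw [norm_mul, hexp_norm]
    calc Real.exp (-(p.re * x)) * ‖f x‖ ≤ Real.exp (-(p.re * x)) * Cf :=
        mul_le_mul_of_nonneg_left (hfb x (le_of_lt hx)) (Real.exp_pos _).le
      _ = Cf * Real.exp (-p.re * x) := by rw [mul_comm, neg_mul]
  have ha_meas : AEStronglyMeasurable a (volume.restrict (Set.Ioi 0)) :=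
    (ha_cont.mono Set.Ioi_subset_Ici_self).aestronglyMeasurable measurableSet_Ioi
  have hIa : IntegrableOn (fun s : ℝ => Complex.exp (-(p * s)) * a s) (Set.Ioi 0) :=
    key_int a Ca ha_meas hCa
  have hIb : IntegrableOn (fun s : ℝ => Complex.exp (-(p * s)) * b s) (Set.Ioi 0) :=
    key_int b Cb hb_meas.restrict hCb
  have hIc' : IntegrableOn (fun s : ℝ => Complex.exp (-(p * s)) * Set.indicator (Set.Ici 0) c s)
      (Set.Ioi 0) :=
    key_int _ (max Cc 0) hc'_meas.restrict (fun t _ => hc'_bdd t)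
  -- integrability of e^{-pu} K u
  have hIK : IntegrableOn (fun u : ℝ => Complex.exp (-(p * u)) * K u) (Set.Ioi 0) := by
    have hmaj : IntegrableOn (fun x : ℝ => max Cc 0 * (x * Real.exp (-p.re * x)))
        (Set.Ioi 0) := by
      have h1 : IntegrableOn (fun x : ℝ => x ^ (1:ℝ) * Real.exp (-p.re * x ^ (1:ℝ)))
          (Set.Ioi 0) :=
        integrableOn_rpow_mul_exp_neg_mul_rpow (by norm_num) (by norm_num) hp
      have h2 : IntegrableOn (fun x : ℝ => x * Real.exp (-p.re * x)) (Set.Ioi 0) := by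
        refine h1.congr_fun (fun x hx => ?_) measurableSet_Ioi
        simp only [Real.rpow_one]
      exact h2.const_mul _
    refine hmaj.mono' (hcont_exp.mul hK_cont).aestronglyMeasurable.restrict ?_
    filter_upwards [self_mem_ae_restrict measurableSet_Ioi] with x hx
    rw [norm_mul, hexp_norm]
    calc Real.exp (-(p.re * x)) * ‖K x‖ ≤ Real.exp (-(p.re * x)) * (max Cc 0 * |x|) :=
        mul_le_mul_of_nonneg_left (hK_bdd x) (Real.exp_pos _).le
      _ = max Cc 0 * (x * Real.exp (-p.re * x)) := by
        rw [abs_of_pos hx, neg_mul]; ring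
  -- ∫ e^{-pu} K u = ĉ / p
  have hcc' : (∫ s in Set.Ioi (0:ℝ), Complex.exp (-(p * s)) * Set.indicator (Set.Ici 0) c s) =
      ∫ s in Set.Ioi (0:ℝ), Complex.exp (-(p * s)) * c s := by
    refine setIntegral_congr_fun measurableSet_Ioi fun x hx => ?_
    congr 1
    exact Set.indicator_of_mem (le_of_lt hx : (0:ℝ) ≤ x) c
  have hKhat : (∫ u in Set.Ioi (0:ℝ), Complex.exp (-(p * u)) * K u) =
      (∫ s in Set.Ioi (0:ℝ), Complex.exp (-(p * s)) * c s) * (1 / p) := by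
    rw [← hcc']
    exact vlt_fub1 hp _ hIc'
  -- the convolution term
  have fub2 : (∫ x in Set.Ioi (0:ℝ),
        Complex.exp (-(p * x)) * ∫ t in (0:ℝ)..x, K (x - t) * a t) =
      (∫ s in Set.Ioi (0:ℝ), Complex.exp (-(p * s)) * a s) *
        (∫ u in Set.Ioi (0:ℝ), Complex.exp (-(p * u)) * K u) :=
    vlt_conv a K hIa hIK
  have fub2_int : IntegrableOn
      (fun x : ℝ => Complex.exp (-(p * x)) * ∫ t in (0:ℝ)..x, K (x - t) * a t)
      (Set.Ioi 0) := vlt_conv_int a K hIa hIK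
  -- rewrite heq pointwise, multiplied by the exponential
  have heq' : ∀ x ∈ Set.Ioi (0:ℝ),
      Complex.exp (-(p * x)) * (∫ t in (0:ℝ)..x, a t) =
        Complex.exp (-(p * x)) * (∫ t in (0:ℝ)..x, b t) +
          Complex.I * lam * (Complex.exp (-(p * x)) * ∫ t in (0:ℝ)..x, K (x - t) * a t) := by
    intro x hx
    have hx0 : (0:ℝ) ≤ x := le_of_lt hx
    have hKeq : (∫ t in (0:ℝ)..x, K (x - t) * a t) =
        ∫ t in (0:ℝ)..x, (∫ r in (0:ℝ)..(x - t), c r) * a t := by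
      refine intervalIntegral.integral_congr fun t ht => ?_
      rw [Set.uIcc_of_le hx0] at ht
      have h1 : (0:ℝ) ≤ x - t := by linarith [ht.2]
      congr 1
      refine intervalIntegral.integral_congr fun r hr => ?_
      rw [Set.uIcc_of_le h1] at hr
      exact Set.indicator_of_mem hr.1 c
    rw [hKeq, heq x hx0]
    ring
  -- integrate both sides
  have main : (∫ x in Set.Ioi (0:ℝ), Complex.exp (-(p * x)) * ∫ t in (0:ℝ)..x, a t) =
      (∫ x in Set.Ioi (0:ℝ), Complex.exp (-(p * x)) * ∫ t in (0:ℝ)..x, b t) +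
        Complex.I * lam *
          ∫ x in Set.Ioi (0:ℝ), Complex.exp (-(p * x)) * ∫ t in (0:ℝ)..x, K (x - t) * a t := by
    rw [setIntegral_congr_fun measurableSet_Ioi heq',
      integral_add (vlt_fub1_int hp b hIb) (fub2_int.const_mul _), MeasureTheory.integral_const_mul]
  rw [vlt_fub1 hp a hIa, vlt_fub1 hp b hIb, fub2, hKhat] at main
  -- algebra
  have h1z : (1 : ℂ) - Complex.I * lam *
      (∫ s in Set.Ioi (0:ℝ), Complex.exp (-(p * s)) * c s) ≠ 0 :=
    sub_ne_zero_of_ne (Ne.symm hne)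
  rw [eq_div_iff h1z]
  field_simp at main ⊢
  linear_combination main
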